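/- Let q>0 with q≠1, let y>0 be fixed, and let f be a positive function on (0,∞) satisfying: (i) f(x+1) = ((1−q^x)/(1−q^{x+y})) f(x) for all x>0; (ii) f is logarithmically convex for x>M for some M≥0; (iii) f(1) = (1−q)/(1−q^y). Then f(x) = B_q(x,y) for all x>0. -/

import Mathlib

open Real Set

/-- The infinite q-Pochhammer symbol `(a;p)_∞ = ∏_{k≥0} (1 - a p^k)`. -/
noncomputable def qPochInf (a p : ℝ) : ℝ := ∏' k : ℕ, (1 - a * p ^ k)

/-- Jackson's q-gamma function for `0 < q < 1`. -/
noncomputable def qGamma (q x : ℝ) : ℝ :=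
  qPochInf q q / qPochInf (q ^ x) q * (1 - q) ^ (1 - x)

/-- The q-gamma function for `q > 1`. -/
noncomputable def qGammaBig (q x : ℝ) : ℝ :=
  qPochInf q⁻¹ q⁻¹ / qPochInf (q ^ (-x)) q⁻¹ * (q - 1) ^ (1 - x) * q ^ (x * (x - 1) / 2)

/-- The q-gamma function for any positive `q ≠ 1`. -/
noncomputable def qGammaAll (q x : ℝ) : ℝ := if q < 1 then qGamma q x else qGammaBig q x

/-- The q-beta function `B_q(x,y) = Γ_q(x)Γ_q(y)/Γ_q(x+y)`. -/
noncomputable def qBeta (q x y : ℝ) : ℝ :=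
  qGammaAll q x * qGammaAll q y / qGammaAll q (x + y)

lemma summable_logfac {q : ℝ} (hq0 : 0 < q) (hq1 : q < 1) {a : ℝ} (ha0 : 0 ≤ a) (ha1 : a < 1) :
    Summable fun k : ℕ => Real.log (1 - a * q ^ k) := by
  have hterm : ∀ k : ℕ, 0 ≤ a * q ^ k ∧ a * q ^ k ≤ a := fun k => by
    have h1 : q ^ k ≤ 1 := pow_le_one₀ hq0.le hq1.le
    have h2 : (0:ℝ) ≤ q ^ k := by positivity
    exact ⟨by positivity, by nlinarith⟩
  have hpos : ∀ k : ℕ, 0 < 1 - a * q ^ k := fun k =>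
    sub_pos.2 (lt_of_le_of_lt (hterm k).2 ha1)
  rw [← summable_neg_iff]
  have hbnd : ∀ k : ℕ, -Real.log (1 - a * q ^ k) ≤ (1 - a)⁻¹ * (a * q ^ k) := by
    intro k
    rw [← Real.log_inv]
    have h2 : Real.log (1 - a * q ^ k)⁻¹ ≤ (1 - a * q ^ k)⁻¹ - 1 :=
      Real.log_le_sub_one_of_pos (inv_pos.2 (hpos k))
    have h3 : (1 - a * q ^ k)⁻¹ - 1 ≤ (1 - a)⁻¹ * (a * q ^ k) := by
      have htinv : (1 - a * q ^ k)⁻¹ ≤ (1 - a)⁻¹ := by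
        apply inv_anti₀ (by linarith) (by linarith [(hterm k).2])
      have heq0 : ∀ t : ℝ, t ≠ 0 → t⁻¹ - 1 = (1 - t) * t⁻¹ := by
        intro t ht; field_simp
      have heq : (1 - a * q ^ k)⁻¹ - 1 = (a * q ^ k) * (1 - a * q ^ k)⁻¹ := by
        rw [heq0 _ (hpos k).ne']; congr 1; ring
      rw [heq]
      calc (a * q ^ k) * (1 - a * q ^ k)⁻¹ ≤ (a * q ^ k) * (1 - a)⁻¹ :=
            mul_le_mul_of_nonneg_left htinv (hterm k).1
        _ = (1 - a)⁻¹ * (a * q ^ k) := by ring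
    exact h2.trans h3
  apply Summable.of_nonneg_of_le _ hbnd
  · exact (((summable_geometric_of_lt_one hq0.le hq1).mul_left a).mul_left (1-a)⁻¹)
  · intro k
    simp only [neg_nonneg]
    exact Real.log_nonpos (hpos k).le (by nlinarith [(hterm k).1, (hterm k).2])

lemma factor_pos {q : ℝ} (hq0 : 0 < q) (hq1 : q < 1) {a : ℝ} (ha0 : 0 ≤ a) (ha1 : a < 1)
    (k : ℕ) : 0 < 1 - a * q ^ k := by
  have h1 : q ^ k ≤ 1 := pow_le_one₀ hq0.le hq1.le
  have h2 : (0:ℝ) ≤ q ^ k := by positivity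
  nlinarith

lemma qPochInf_eq_exp {q : ℝ} (hq0 : 0 < q) (hq1 : q < 1) {a : ℝ} (ha0 : 0 ≤ a) (ha1 : a < 1) :
    qPochInf a q = Real.exp (∑' k : ℕ, Real.log (1 - a * q ^ k)) := by
  exact (Real.rexp_tsum_eq_tprod (f := fun k : ℕ => 1 - a * q ^ k)
    (fun k => factor_pos hq0 hq1 ha0 ha1 k)
    (summable_logfac hq0 hq1 ha0 ha1)).symm

lemma qPochInf_pos {q : ℝ} (hq0 : 0 < q) (hq1 : q < 1) {a : ℝ} (ha0 : 0 ≤ a) (ha1 : a < 1) :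
    0 < qPochInf a q := by
  rw [qPochInf_eq_exp hq0 hq1 ha0 ha1]; exact Real.exp_pos _

lemma qPochInf_multipliable {q : ℝ} (hq0 : 0 < q) (hq1 : q < 1) {a : ℝ} (ha0 : 0 ≤ a)
    (ha1 : a < 1) : Multipliable fun k : ℕ => (1 - a * q ^ k) :=
  Real.multipliable_of_summable_log
    (fun k => factor_pos hq0 hq1 ha0 ha1 k)
    (summable_logfac hq0 hq1 ha0 ha1)

set_option maxHeartbeats 1600000 in
lemma qPochInf_rec {q : ℝ} (hq0 : 0 < q) (hq1 : q < 1) {a : ℝ} (ha0 : 0 ≤ a) (ha1 : a < 1) :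
    qPochInf a q = (1 - a) * qPochInf (a * q) q := by
  have haq0 : 0 ≤ a * q := by positivity
  have haq1 : a * q < 1 := by nlinarith
  have hkey : ∀ k : ℕ, 1 - (a * q) * q ^ k = 1 - a * q ^ (k + 1) := by
    intro k; rw [pow_succ']; ring
  have hm' : Multipliable fun n : ℕ => 1 - a * q ^ (n + 1) :=
    (qPochInf_multipliable hq0 hq1 haq0 haq1).congr hkey
  have h2 := tprod_eq_zero_mul' (f := fun k : ℕ => 1 - a * q ^ k) hm'
  simp only [pow_zero, mul_one] at h2
  rw [qPochInf, h2]
  congr 1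
  rw [qPochInf, ← tprod_congr hkey]

lemma weier_finite (u : ℕ → ℝ) (h0 : ∀ k, 0 ≤ u k) (h1 : ∀ k, u k ≤ 1) (F : Finset ℕ) :
    1 - ∑ k ∈ F, u k ≤ ∏ k ∈ F, (1 - u k) := by
  classical
  induction F using Finset.induction with
  | empty => simp
  | @insert a s ha ih =>
    rw [Finset.prod_insert ha, Finset.sum_insert ha]
    have hP : (0:ℝ) ≤ ∏ k ∈ s, (1 - u k) :=
      Finset.prod_nonneg fun i _ => by linarith [h1 i]
    have hS : (0:ℝ) ≤ ∑ k ∈ s, u k := Finset.sum_nonneg fun i _ => h0 i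
    nlinarith [h0 a, h1 a]

lemma qPochInf_le_one {q : ℝ} (hq0 : 0 < q) (hq1 : q < 1) {a : ℝ} (ha0 : 0 ≤ a) (ha1 : a < 1) :
    qPochInf a q ≤ 1 := by
  rw [qPochInf_eq_exp hq0 hq1 ha0 ha1]
  have hts : (∑' k : ℕ, Real.log (1 - a * q ^ k)) ≤ 0 := by
    apply tsum_nonpos
    intro k
    exact Real.log_nonpos (factor_pos hq0 hq1 ha0 ha1 k).le
      (by nlinarith [factor_pos hq0 hq1 ha0 ha1 k, pow_nonneg hq0.le k,
        mul_nonneg ha0 (pow_nonneg hq0.le k)])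
  calc Real.exp (∑' k : ℕ, Real.log (1 - a * q ^ k)) ≤ Real.exp 0 := Real.exp_le_exp.2 hts
    _ = 1 := Real.exp_zero

lemma qPochInf_ge {q : ℝ} (hq0 : 0 < q) (hq1 : q < 1) {a : ℝ} (ha0 : 0 ≤ a) (ha1 : a < 1) :
    1 - a / (1 - q) ≤ qPochInf a q := by
  have hm := qPochInf_multipliable hq0 hq1 ha0 ha1
  apply ge_of_tendsto' hm.hasProd
  intro F
  have h1 : 1 - ∑ k ∈ F, a * q ^ k ≤ ∏ k ∈ F, (1 - a * q ^ k) := by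
    apply weier_finite
    · intro k; positivity
    · intro k
      have h1 : q ^ k ≤ 1 := pow_le_one₀ hq0.le hq1.le
      have h2 : (0:ℝ) ≤ q ^ k := by positivity
      nlinarith
  have h2 : ∑ k ∈ F, a * q ^ k ≤ a / (1 - q) := by
    have hs : Summable fun k : ℕ => a * q ^ k :=
      (summable_geometric_of_lt_one hq0.le hq1).mul_left a
    have := Summable.sum_le_tsum F (fun k _ => by positivity) hs
    rwa [tsum_mul_left, tsum_geometric_of_lt_one hq0.le hq1, ← div_eq_mul_inv] at this
  linarith
lemma rpow_mem {q : ℝ} (hq0 : 0 < q) (hq1 : q < 1) {x : ℝ} (hx : 0 < x) :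
    0 ≤ q ^ x ∧ q ^ x < 1 :=
  ⟨(Real.rpow_pos_of_pos hq0 x).le, Real.rpow_lt_one hq0.le hq1 hx⟩

lemma qBeta_closed {q y x : ℝ} (hq0 : 0 < q) (hq1 : q < 1) (hy : 0 < y) (hx : 0 < x) :
    qBeta q x y = (1 - q) * qPochInf q q * qPochInf (q ^ (x + y)) q /
      (qPochInf (q ^ x) q * qPochInf (q ^ y) q) := by
  have hb : (0:ℝ) < 1 - q := by linarith
  have px := qPochInf_pos hq0 hq1 (rpow_mem hq0 hq1 hx).1 (rpow_mem hq0 hq1 hx).2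
  have py := qPochInf_pos hq0 hq1 (rpow_mem hq0 hq1 hy).1 (rpow_mem hq0 hq1 hy).2
  have pxy := qPochInf_pos hq0 hq1 (rpow_mem hq0 hq1 (by linarith : 0 < x + y)).1
    (rpow_mem hq0 hq1 (by linarith : 0 < x + y)).2
  have pq := qPochInf_pos hq0 hq1 hq0.le hq1
  have r1 : (0:ℝ) < (1 - q) ^ (1 - x) := Real.rpow_pos_of_pos hb _
  have r2 : (0:ℝ) < (1 - q) ^ (1 - y) := Real.rpow_pos_of_pos hb _
  have r3 : (0:ℝ) < (1 - q) ^ (1 - (x + y)) := Real.rpow_pos_of_pos hb _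
  have hr : (1 - q) ^ (1 - x) * (1 - q) ^ (1 - y) = (1 - q) * (1 - q) ^ (1 - (x + y)) := by
    rw [← Real.rpow_add hb]
    nth_rewrite 2 [← Real.rpow_one (1 - q)]
    rw [← Real.rpow_add hb]
    congr 1
    ring
  rw [qBeta, qGammaAll, qGammaAll, qGammaAll, if_pos hq1, if_pos hq1, if_pos hq1,
    qGamma, qGamma, qGamma]
  rw [div_eq_div_iff (by positivity) (by positivity)]
  field_simp
  linear_combination hr

lemma qBeta_pos {q y x : ℝ} (hq0 : 0 < q) (hq1 : q < 1) (hy : 0 < y) (hx : 0 < x) :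
    0 < qBeta q x y := by
  rw [qBeta_closed hq0 hq1 hy hx]
  have hb : (0:ℝ) < 1 - q := by linarith
  have px := qPochInf_pos hq0 hq1 (rpow_mem hq0 hq1 hx).1 (rpow_mem hq0 hq1 hx).2
  have py := qPochInf_pos hq0 hq1 (rpow_mem hq0 hq1 hy).1 (rpow_mem hq0 hq1 hy).2
  have pxy := qPochInf_pos hq0 hq1 (rpow_mem hq0 hq1 (by linarith : 0 < x + y)).1
    (rpow_mem hq0 hq1 (by linarith : 0 < x + y)).2
  have pq := qPochInf_pos hq0 hq1 hq0.le hq1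
  positivity

lemma qPochInf_rpow_rec {q x : ℝ} (hq0 : 0 < q) (hq1 : q < 1) (hx : 0 < x) :
    qPochInf (q ^ x) q = (1 - q ^ x) * qPochInf (q ^ (x + 1)) q := by
  have := qPochInf_rec hq0 hq1 (rpow_mem hq0 hq1 hx).1 (rpow_mem hq0 hq1 hx).2
  rwa [← Real.rpow_add_one hq0.ne' x] at this

lemma qBeta_rec {q y x : ℝ} (hq0 : 0 < q) (hq1 : q < 1) (hy : 0 < y) (hx : 0 < x) :
    qBeta q (x + 1) y = (1 - q ^ x) / (1 - q ^ (x + y)) * qBeta q x y := by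
  rw [qBeta_closed hq0 hq1 hy (by linarith : (0:ℝ) < x + 1), qBeta_closed hq0 hq1 hy hx]
  have e1 : x + 1 + y = x + y + 1 := by ring
  rw [e1, qPochInf_rpow_rec hq0 hq1 (by linarith : (0:ℝ) < x + y),
    qPochInf_rpow_rec hq0 hq1 hx]
  have h1 : (0:ℝ) < 1 - q ^ x := sub_pos.2 (rpow_mem hq0 hq1 hx).2
  have h2 : (0:ℝ) < 1 - q ^ (x + y) := sub_pos.2 (rpow_mem hq0 hq1 (by linarith : 0 < x + y)).2
  have px1 := qPochInf_pos hq0 hq1 (rpow_mem hq0 hq1 (by linarith : (0:ℝ) < x + 1)).1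
    (rpow_mem hq0 hq1 (by linarith : (0:ℝ) < x + 1)).2
  have pxy1 := qPochInf_pos hq0 hq1 (rpow_mem hq0 hq1 (by linarith : (0:ℝ) < x + y + 1)).1
    (rpow_mem hq0 hq1 (by linarith : (0:ℝ) < x + y + 1)).2
  have py := qPochInf_pos hq0 hq1 (rpow_mem hq0 hq1 hy).1 (rpow_mem hq0 hq1 hy).2
  have pq := qPochInf_pos hq0 hq1 hq0.le hq1
  field_simp

lemma qBeta_one {q y : ℝ} (hq0 : 0 < q) (hq1 : q < 1) (hy : 0 < y) :
    qBeta q 1 y = (1 - q) / (1 - q ^ y) := by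
  rw [qBeta_closed hq0 hq1 hy one_pos]
  have e1 : (1:ℝ) + y = y + 1 := by ring
  rw [e1, qPochInf_rpow_rec hq0 hq1 hy, Real.rpow_one]
  have h1 : (0:ℝ) < 1 - q ^ y := sub_pos.2 (rpow_mem hq0 hq1 hy).2
  have py1 := qPochInf_pos hq0 hq1 (rpow_mem hq0 hq1 (by linarith : (0:ℝ) < y + 1)).1
    (rpow_mem hq0 hq1 (by linarith : (0:ℝ) < y + 1)).2
  have pq := qPochInf_pos hq0 hq1 hq0.le hq1
  field_simp

lemma qPochInf_tendsto_one {q : ℝ} (hq0 : 0 < q) (hq1 : q < 1) {a : ℕ → ℝ}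
    (h0 : ∀ n, 0 ≤ a n) (h1 : ∀ n, a n < 1) (ha : Filter.Tendsto a Filter.atTop (nhds 0)) :
    Filter.Tendsto (fun n => qPochInf (a n) q) Filter.atTop (nhds 1) := by
  apply tendsto_of_tendsto_of_tendsto_of_le_of_le
    (g := fun n => 1 - a n / (1 - q)) (h := fun _ : ℕ => (1:ℝ))
  · have : Filter.Tendsto (fun n => a n / (1 - q)) Filter.atTop (nhds 0) := by
      simpa using ha.div_const (1 - q)
    have h2 := this.const_sub 1
    simpa using h2
  · exact tendsto_const_nhds
  · exact fun n => qPochInf_ge hq0 hq1 (h0 n) (h1 n)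
  · exact fun n => qPochInf_le_one hq0 hq1 (h0 n) (h1 n)

lemma qBeta_tendsto {q y x : ℝ} (hq0 : 0 < q) (hq1 : q < 1) (hy : 0 < y) (hx : 0 < x) :
    Filter.Tendsto (fun n : ℕ => qBeta q (x + n) y) Filter.atTop
      (nhds ((1 - q) * qPochInf q q / qPochInf (q ^ y) q)) := by
  have hxn : ∀ n : ℕ, (0:ℝ) < x + n := fun n => by positivity
  have key : ∀ s : ℝ, 0 < s → Filter.Tendsto (fun n : ℕ => q ^ (s + n)) Filter.atTop (nhds 0) := by
    intro s hs
    have : (fun n : ℕ => q ^ (s + (n:ℝ))) = fun n : ℕ => q ^ s * q ^ n := by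
      funext n
      rw [Real.rpow_add hq0, Real.rpow_natCast]
    rw [this]
    simpa using (tendsto_pow_atTop_nhds_zero_of_lt_one hq0.le hq1).const_mul (q ^ s)
  have t1 : Filter.Tendsto (fun n : ℕ => qPochInf (q ^ (x + n)) q) Filter.atTop (nhds 1) :=
    qPochInf_tendsto_one hq0 hq1 (fun n => (rpow_mem hq0 hq1 (hxn n)).1)
      (fun n => (rpow_mem hq0 hq1 (hxn n)).2) (key x hx)
  have t2 : Filter.Tendsto (fun n : ℕ => qPochInf (q ^ (x + n + y)) q) Filter.atTop (nhds 1) := by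
    have := qPochInf_tendsto_one hq0 hq1
      (fun n => (rpow_mem hq0 hq1 (by linarith [hxn n] : (0:ℝ) < x + y + n)).1)
      (fun n => (rpow_mem hq0 hq1 (by linarith [hxn n] : (0:ℝ) < x + y + n)).2)
      (key (x + y) (by linarith))
    apply this.congr
    intro n
    congr 1
    ring_nf
  have py := qPochInf_pos hq0 hq1 (rpow_mem hq0 hq1 hy).1 (rpow_mem hq0 hq1 hy).2
  have pq := qPochInf_pos hq0 hq1 hq0.le hq1
  have hcombined : Filter.Tendsto
      (fun n : ℕ => (1 - q) * qPochInf q q * qPochInf (q ^ (x + n + y)) q /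
        (qPochInf (q ^ (x + n)) q * qPochInf (q ^ y) q)) Filter.atTop
      (nhds ((1 - q) * qPochInf q q / qPochInf (q ^ y) q)) := by
    have hden : Filter.Tendsto (fun n : ℕ => qPochInf (q ^ (x + n)) q * qPochInf (q ^ y) q)
        Filter.atTop (nhds (1 * qPochInf (q ^ y) q)) := t1.mul tendsto_const_nhds
    have hnum := t2.const_mul ((1 - q) * qPochInf q q)
    have hdiv := hnum.div hden (by simpa using py.ne')
    simpa [Pi.div_def] using hdiv
  apply hcombined.congr
  intro n
  rw [qBeta_closed hq0 hq1 hy (hxn n)]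
theorem coreQ {q : ℝ} (hq0 : 0 < q) (hq1 : q < 1) {y : ℝ} (hy : 0 < y)
    (f : ℝ → ℝ) (hpos : ∀ x > 0, 0 < f x)
    (hfe : ∀ x > 0, f (x + 1) = (1 - q ^ x) / (1 - q ^ (x + y)) * f x)
    (M : ℝ) (hM : 0 ≤ M)
    (hconv : ConvexOn ℝ (Ioi M) (fun x => Real.log (f x)))
    (hf1 : f 1 = (1 - q) / (1 - q ^ y)) :
    ∀ x > 0, f x = qBeta q x y := by
  have hrnum : ∀ x : ℝ, 0 < x → 0 < 1 - q ^ x := fun x hx =>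
    sub_pos.2 (rpow_mem hq0 hq1 hx).2
  have hrpos : ∀ x : ℝ, 0 < x → 0 < (1 - q ^ x) / (1 - q ^ (x + y)) := fun x hx =>
    div_pos (hrnum x hx) (hrnum (x + y) (by linarith))
  set r : ℝ → ℝ := fun x => (1 - q ^ x) / (1 - q ^ (x + y)) with hr
  have hBpos : ∀ x : ℝ, 0 < x → 0 < qBeta q x y := fun x hx => qBeta_pos hq0 hq1 hy hx
  have hBrec : ∀ x : ℝ, 0 < x → qBeta q (x + 1) y = r x * qBeta q x y := fun x hx =>
    qBeta_rec hq0 hq1 hy hx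
  have hB1 : f 1 = qBeta q 1 y := by rw [hf1]; exact (qBeta_one hq0 hq1 hy).symm
  have anchor : ∀ n : ℕ, f (1 + n) = qBeta q (1 + n) y := by
    intro n
    induction n with
    | zero => simpa using hB1
    | succ n ih =>
      have h1 : (0:ℝ) < 1 + n := by positivity
      have e1 : (1:ℝ) + (n + 1 : ℕ) = (1 + n) + 1 := by push_cast; ring
      rw [e1, hfe _ h1, hBrec _ h1, ih]
  have shift : ∀ x : ℝ, 0 < x → ∀ n : ℕ,
      f (x + n) * qBeta q x y = f x * qBeta q (x + n) y := by
    intro x hx n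
    induction n with
    | zero => norm_num
    | succ n ih =>
      have h1 : (0:ℝ) < x + n := by positivity
      have e1 : x + (n + 1 : ℕ) = (x + n) + 1 := by push_cast; ring
      rw [e1, hfe _ h1, hBrec _ h1]
      calc r (x + n) * f (x + n) * qBeta q x y = r (x + n) * (f (x + n) * qBeta q x y) := by
            ring
        _ = r (x + n) * (f x * qBeta q (x + n) y) := by rw [ih]
        _ = f x * (r (x + n) * qBeta q (x + n) y) := by ring
  have keyq : ∀ s : ℝ, Filter.Tendsto (fun n : ℕ => q ^ (s + n)) Filter.atTop (nhds 0) := by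
    intro s
    have e : (fun n : ℕ => q ^ (s + (n:ℝ))) = fun n : ℕ => q ^ s * q ^ n := by
      funext n; rw [Real.rpow_add hq0, Real.rpow_natCast]
    rw [e]
    simpa using (tendsto_pow_atTop_nhds_zero_of_lt_one hq0.le hq1).const_mul (q ^ s)
  have logr : ∀ c : ℝ, 0 < c →
      Filter.Tendsto (fun n : ℕ => Real.log (r (c + n))) Filter.atTop (nhds 0) := by
    intro c hc
    have t1 : Filter.Tendsto (fun n : ℕ => 1 - q ^ (c + n)) Filter.atTop (nhds (1 - 0)) :=
      tendsto_const_nhds.sub (keyq c)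
    have t2 : Filter.Tendsto (fun n : ℕ => 1 - q ^ (c + n + y)) Filter.atTop (nhds (1 - 0)) := by
      have h : Filter.Tendsto (fun n : ℕ => 1 - q ^ (c + y + (n:ℝ))) Filter.atTop
          (nhds (1 - 0)) := tendsto_const_nhds.sub (keyq (c + y))
      apply h.congr
      intro n
      congr 2
      ring
    have t3 := (t1.div t2 (by norm_num)).log (by norm_num)
    simp only [sub_zero, div_one, Real.log_one] at t3
    exact t3
  have main : ∀ x : ℝ, 0 < x → x < 1 → f x = qBeta q x y := by
    intro x hx hx1
    set L : ℝ → ℝ := fun t => Real.log (f t) with hL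
    have hLd : ∀ t : ℝ, 0 < t → L (t + 1) - L t = Real.log (r t) := by
      intro t ht
      rw [hL]
      simp only
      rw [hfe t ht, Real.log_mul (hrpos t ht).ne' (hpos t ht).ne']
      ring
    obtain ⟨N, hN⟩ := exists_nat_gt M
    have hub : ∀ n : ℕ, N ≤ n →
        L (x + 2 + n) - L (2 + n) ≤ x * Real.log (r (2 + n)) := by
      intro n hn
      have hMn : M < 1 + (n:ℝ) := by
        have : (N:ℝ) ≤ n := Nat.cast_le.2 hn
        linarith
      have m1 : (2:ℝ) + n ∈ Ioi M := by simp only [mem_Ioi]; linarith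
      have m3 : (3:ℝ) + n ∈ Ioi M := by simp only [mem_Ioi]; linarith
      have hs := hconv.slope_mono_adjacent m1 m3
        (show (2:ℝ) + n < x + 2 + n by linarith)
        (show x + 2 + n < 3 + n by linarith)
      have e1 : x + 2 + (n:ℝ) - (2 + n) = x := by ring
      have e2 : (3:ℝ) + n - (x + 2 + n) = 1 - x := by ring
      rw [e1, e2] at hs
      have hd : L (3 + n) - L (2 + n) = Real.log (r (2 + n)) := by
        have h := hLd (2 + n) (by positivity)
        have e : (2:ℝ) + n + 1 = 3 + n := by ring
        rw [e] at h
        exact h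
      have h1x : (0:ℝ) < 1 - x := by linarith
      rw [div_le_div_iff₀ hx h1x] at hs
      nlinarith [hs, hd]
    have hlb : ∀ n : ℕ, N ≤ n →
        x * Real.log (r (1 + n)) ≤ L (x + 2 + n) - L (2 + n) := by
      intro n hn
      have hMn : M < 1 + (n:ℝ) := by
        have : (N:ℝ) ≤ n := Nat.cast_le.2 hn
        linarith
      have m1 : (1:ℝ) + n ∈ Ioi M := by simp only [mem_Ioi]; linarith
      have m3 : x + 2 + (n:ℝ) ∈ Ioi M := by simp only [mem_Ioi]; linarith
      have hs := hconv.slope_mono_adjacent m1 m3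
        (show (1:ℝ) + n < 2 + n by linarith)
        (show (2:ℝ) + n < x + 2 + n by linarith)
      have e1 : (2:ℝ) + n - (1 + n) = 1 := by ring
      have e2 : x + 2 + (n:ℝ) - (2 + n) = x := by ring
      rw [e1, e2] at hs
      have hd : L (2 + n) - L (1 + n) = Real.log (r (1 + n)) := by
        have h := hLd (1 + n) (by positivity)
        have e : (1:ℝ) + n + 1 = 2 + n := by ring
        rw [e] at h
        exact h
      rw [div_one, hd] at hs
      have h2 := (le_div_iff₀ hx).1 hs
      linarith [mul_comm x (Real.log (r (1 + n)))]
    have tub : Filter.Tendsto (fun n : ℕ => x * Real.log (r (2 + n))) Filter.atTop (nhds 0) := by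
      simpa using (logr 2 two_pos).const_mul x
    have tlb : Filter.Tendsto (fun n : ℕ => x * Real.log (r (1 + n))) Filter.atTop (nhds 0) := by
      simpa using (logr 1 one_pos).const_mul x
    have tdiff : Filter.Tendsto (fun n : ℕ => L (x + 2 + n) - L (2 + n)) Filter.atTop (nhds 0) :=
      tendsto_of_tendsto_of_tendsto_of_le_of_le' tlb tub
        (Filter.eventually_atTop.2 ⟨N, hlb⟩) (Filter.eventually_atTop.2 ⟨N, hub⟩)
    have hc : (0:ℝ) < (1 - q) * qPochInf q q / qPochInf (q ^ y) q := by
      have pq := qPochInf_pos hq0 hq1 hq0.le hq1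
      have py := qPochInf_pos hq0 hq1 (rpow_mem hq0 hq1 hy).1 (rpow_mem hq0 hq1 hy).2
      have hb : (0:ℝ) < 1 - q := by linarith
      positivity
    have tBx := ((qBeta_tendsto hq0 hq1 hy (by linarith : (0:ℝ) < x + 2)).log hc.ne')
    have tB2 := ((qBeta_tendsto hq0 hq1 hy (by norm_num : (0:ℝ) < 2)).log hc.ne')
    have tB : Filter.Tendsto
        (fun n : ℕ => Real.log (qBeta q (x + 2 + n) y) - Real.log (qBeta q (2 + n) y))
        Filter.atTop (nhds 0) := by
      simpa using tBx.sub tB2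
    have hdn : ∀ n : ℕ,
        (L (x + 2 + n) - L (2 + n)) -
          (Real.log (qBeta q (x + 2 + n) y) - Real.log (qBeta q (2 + n) y)) =
        Real.log (f x) - Real.log (qBeta q x y) := by
      intro n
      have hsh := shift x hx (n + 2)
      have e : x + ((n : ℕ) + 2 : ℕ) = x + 2 + (n:ℝ) := by push_cast; ring
      rw [e] at hsh
      have hanch := anchor (n + 1)
      have e2 : (1:ℝ) + ((n:ℕ) + 1 : ℕ) = 2 + (n:ℝ) := by push_cast; ring
      rw [e2] at hanch
      have hfp1 : 0 < f (x + 2 + n) := hpos _ (by positivity)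
      have hfp2 : 0 < f x := hpos _ hx
      have hbp1 : 0 < qBeta q (x + 2 + n) y := hBpos _ (by positivity)
      have hbp2 : 0 < qBeta q x y := hBpos _ hx
      have hlog := congrArg Real.log hsh
      rw [Real.log_mul hfp1.ne' hbp2.ne', Real.log_mul hfp2.ne' hbp1.ne'] at hlog
      have hanchlog : L (2 + n) = Real.log (qBeta q (2 + n) y) := congrArg Real.log hanch
      simp only [hL]
      linarith [hlog, hanchlog]
    have tconst : Filter.Tendsto
        (fun _ : ℕ => Real.log (f x) - Real.log (qBeta q x y)) Filter.atTop (nhds 0) := by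
      have t0 : Filter.Tendsto
          (fun n : ℕ => (L (x + 2 + n) - L (2 + n)) -
            (Real.log (qBeta q (x + 2 + n) y) - Real.log (qBeta q (2 + n) y)))
          Filter.atTop (nhds 0) := by
        simpa using tdiff.sub tB
      exact t0.congr hdn
    have hd0 : Real.log (f x) - Real.log (qBeta q x y) = 0 :=
      tendsto_nhds_unique tendsto_const_nhds tconst
    have hlogeq : Real.log (f x) = Real.log (qBeta q x y) := by linarith
    have := congrArg Real.exp hlogeq
    rwa [Real.exp_log (hpos x hx), Real.exp_log (hBpos x hx)] at this
  have ext : ∀ n : ℕ, ∀ x : ℝ, 0 < x → x ≤ n → f x = qBeta q x y := by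
    intro n
    induction n with
    | zero =>
      intro x hx h
      norm_num at h
      linarith
    | succ n ih =>
      intro x hx hxn
      rcases lt_trichotomy x 1 with h | h | h
      · exact main x hx h
      · rw [h]; exact hB1
      · have hx1 : 0 < x - 1 := by linarith
        have hxn' : x - 1 ≤ n := by
          push_cast at hxn ⊢
          linarith
        have hih := ih (x - 1) hx1 hxn'
        have e : x = (x - 1) + 1 := by ring
        rw [e, hfe _ hx1, hBrec _ hx1, hih]
  intro x hx
  obtain ⟨n, hn⟩ := exists_nat_ge x
  exact ext n x hx hn

lemma qGammaBig_eq {q : ℝ} (hq1 : 1 < q) (t : ℝ) :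
    qGammaBig q t = qGamma q⁻¹ t * q ^ ((t - 1) * (t - 2) / 2) := by
  have hq0 : (0:ℝ) < q := lt_trans one_pos hq1
  have hp1 : (0:ℝ) ≤ 1 - q⁻¹ := by
    have : q⁻¹ ≤ 1 := by
      rw [inv_le_one_iff₀]; right; exact hq1.le
    linarith
  have e1 : q ^ (-t) = (q⁻¹) ^ t := by
    rw [Real.rpow_neg hq0.le, Real.inv_rpow hq0.le]
  have e2 : q - 1 = (1 - q⁻¹) * q := by
    field_simp
  have e3 : (q - 1) ^ (1 - t) = (1 - q⁻¹) ^ (1 - t) * q ^ (1 - t) := by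
    rw [e2, Real.mul_rpow hp1 hq0.le]
  have e4 : q ^ (1 - t) * q ^ (t * (t - 1) / 2) = q ^ ((t - 1) * (t - 2) / 2) := by
    rw [← Real.rpow_add hq0]
    congr 1
    ring
  rw [qGammaBig, qGamma, e1, e3, ← e4]
  ring

lemma qBeta_big_eq {q : ℝ} (hq1 : 1 < q) (x y : ℝ) :
    qBeta q x y = qBeta q⁻¹ x y * q ^ (1 - x * y) := by
  have hq0 : (0:ℝ) < q := lt_trans one_pos hq1
  have hinv1 : q⁻¹ < 1 := by
    rw [inv_lt_one_iff₀]; right; exact hq1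
  have hnl : ¬ q < 1 := not_lt.2 hq1.le
  rw [qBeta, qBeta, qGammaAll, qGammaAll, qGammaAll, qGammaAll, qGammaAll, qGammaAll,
    if_neg hnl, if_neg hnl, if_neg hnl, if_pos hinv1, if_pos hinv1, if_pos hinv1,
    qGammaBig_eq hq1 x, qGammaBig_eq hq1 y, qGammaBig_eq hq1 (x + y)]
  rw [show qGamma q⁻¹ x * q ^ ((x - 1) * (x - 2) / 2) * (qGamma q⁻¹ y * q ^ ((y - 1) * (y - 2) / 2))
      = (qGamma q⁻¹ x * qGamma q⁻¹ y) * (q ^ ((x - 1) * (x - 2) / 2) * q ^ ((y - 1) * (y - 2) / 2))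
    from by ring, mul_div_mul_comm]
  congr 1
  rw [← Real.rpow_add hq0, ← Real.rpow_sub hq0]
  congr 1
  ring

lemma convexOn_affine {s : Set ℝ} (hs : Convex ℝ s) (c d : ℝ) :
    ConvexOn ℝ s (fun x => c * x + d) := by
  refine ⟨hs, fun x _ y _ a b _ _ hab => ?_⟩
  simp only [smul_eq_mul]
  exact le_of_eq (by linear_combination (-d) * hab)

lemma ratio_inv_eq (A B : ℝ) (hA : A ≠ 0) (hB : B ≠ 0) (hAB : 1 - A * B ≠ 0)
    (hAB' : 1 - (A * B)⁻¹ ≠ 0) :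
    (1 - A⁻¹) / (1 - (A * B)⁻¹) = (1 - A) / (1 - A * B) * B := by
  rw [div_mul_eq_mul_div, div_eq_div_iff hAB' hAB]
  field_simp
  ring

lemma one_val_eq (Q B : ℝ) (hQ : Q ≠ 0) (hB : B ≠ 0) (hB1 : 1 - B ≠ 0) (hB1' : 1 - B⁻¹ ≠ 0) :
    (1 - Q) / (1 - B) * (B * Q⁻¹) = (1 - Q⁻¹) / (1 - B⁻¹) := by
  rw [div_mul_eq_mul_div, div_eq_div_iff hB1 hB1']
  field_simp
  ring

theorem stmt17 (q : ℝ) (hq0 : 0 < q) (hq1 : q ≠ 1) (y : ℝ) (hy : 0 < y)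
    (f : ℝ → ℝ) (hpos : ∀ x > 0, 0 < f x)
    (hfe : ∀ x > 0, f (x + 1) = (1 - q ^ x) / (1 - q ^ (x + y)) * f x)
    (M : ℝ) (hM : 0 ≤ M)
    (hconv : ConvexOn ℝ (Ioi M) (fun x => Real.log (f x)))
    (hf1 : f 1 = (1 - q) / (1 - q ^ y)) :
    ∀ x > 0, f x = qBeta q x y := by
  rcases lt_or_gt_of_ne hq1 with hlt | hgt
  · exact coreQ hq0 hlt hy f hpos hfe M hM hconv hf1
  · have hp0 : (0:ℝ) < q⁻¹ := inv_pos.2 hq0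
    have hp1 : q⁻¹ < 1 := inv_lt_one_of_one_lt₀ hgt
    have hA0 : ∀ t : ℝ, q ^ t ≠ 0 := fun t => (Real.rpow_pos_of_pos hq0 t).ne'
    have hAgt : ∀ t : ℝ, 0 < t → 1 < q ^ t := fun t ht => Real.one_lt_rpow hgt ht
    set g : ℝ → ℝ := fun x => f x * q ^ (x * y - 1) with hg
    have hgpos : ∀ x > 0, 0 < g x := fun x hx =>
      mul_pos (hpos x hx) (Real.rpow_pos_of_pos hq0 _)
    have hratio : ∀ x : ℝ, 0 < x →
        (1 - q⁻¹ ^ x) / (1 - q⁻¹ ^ (x + y)) = (1 - q ^ x) / (1 - q ^ (x + y)) * q ^ y := by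
      intro x hx
      have hx' : (0:ℝ) < x + y := by linarith
      have e1 : q⁻¹ ^ x = (q ^ x)⁻¹ := Real.inv_rpow hq0.le x
      have e2 : q⁻¹ ^ (x + y) = (q ^ (x + y))⁻¹ := Real.inv_rpow hq0.le _
      have e3 : q ^ (x + y) = q ^ x * q ^ y := Real.rpow_add hq0 x y
      have h1 : 1 - q ^ x ≠ 0 := sub_ne_zero.2 (ne_of_lt (hAgt x hx))
      have h2 : 1 - q ^ (x + y) ≠ 0 := sub_ne_zero.2 (ne_of_lt (hAgt _ hx'))
      have h3 : 1 - (q ^ (x + y))⁻¹ ≠ 0 := by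
        have h4 : (q ^ (x + y))⁻¹ < 1 := inv_lt_one_of_one_lt₀ (hAgt _ hx')
        exact sub_ne_zero.2 (ne_of_gt (by linarith))
      rw [e1, e2, e3]
      rw [e3] at h2 h3
      exact ratio_inv_eq (q ^ x) (q ^ y) (hA0 x) (hA0 y) h2 h3
    have hgfe : ∀ x > 0, g (x + 1) = (1 - q⁻¹ ^ x) / (1 - q⁻¹ ^ (x + y)) * g x := by
      intro x hx
      show f (x + 1) * q ^ ((x + 1) * y - 1) = _
      rw [hfe x hx, hratio x hx]
      have e : q ^ ((x + 1) * y - 1) = q ^ (x * y - 1) * q ^ y := by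
        rw [← Real.rpow_add hq0]
        congr 1
        ring
      rw [e, hg]
      ring
    have hgconv : ConvexOn ℝ (Ioi M) (fun x => Real.log (g x)) := by
      have h1 := hconv.add (convexOn_affine (convex_Ioi M) (y * Real.log q) (-Real.log q))
      apply h1.congr
      intro x hxM
      have hx0 : 0 < x := lt_of_le_of_lt hM hxM
      show Real.log (f x) + (y * Real.log q * x + -Real.log q) = Real.log (g x)
      rw [hg]
      show _ = Real.log (f x * q ^ (x * y - 1))
      rw [Real.log_mul (hpos x hx0).ne' (Real.rpow_pos_of_pos hq0 _).ne',
        Real.log_rpow hq0]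
      ring
    have hg1 : g 1 = (1 - q⁻¹) / (1 - q⁻¹ ^ y) := by
      show f 1 * q ^ ((1:ℝ) * y - 1) = _
      rw [hf1]
      have e1 : q⁻¹ ^ y = (q ^ y)⁻¹ := Real.inv_rpow hq0.le y
      have e2 : q ^ ((1:ℝ) * y - 1) = q ^ y * q⁻¹ := by
        rw [show (1:ℝ) * y - 1 = y + (-1) by ring, Real.rpow_add hq0, Real.rpow_neg_one]
      have hBgt : 1 < q ^ y := hAgt y hy
      have h1 : 1 - q ^ y ≠ 0 := sub_ne_zero.2 (ne_of_lt hBgt)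
      have h2 : 1 - (q ^ y)⁻¹ ≠ 0 := by
        have h4 : (q ^ y)⁻¹ < 1 := inv_lt_one_of_one_lt₀ hBgt
        exact sub_ne_zero.2 (ne_of_gt (by linarith))
      rw [e1, e2]
      exact one_val_eq q (q ^ y) hq0.ne' (hA0 y) h1 h2
    have key := coreQ hp0 hp1 hy g hgpos hgfe M hM hgconv hg1
    intro x hx
    have hgx := key x hx
    have hfx : f x = g x * q ^ (1 - x * y) := by
      rw [hg]
      show f x = f x * q ^ (x * y - 1) * q ^ (1 - x * y)
      rw [mul_assoc, ← Real.rpow_add hq0, show x * y - 1 + (1 - x * y) = 0 by ring,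
        Real.rpow_zero, mul_one]
    rw [hfx, hgx, ← qBeta_big_eq hgt]
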